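/- Spin-flip contribution bound: Let x ∈ 𝒮_hgt with interface y. Assume (i) there is s̄ > 0 such that p_k(x) + q_k(x) ≥ s̄ for every half-integer k with x_{k−1} ≠ x_k, and (ii) (A4a) for all half-integers k < l such that x_{k−1} ≠ x_k, x_{l−1} ≠ x_l and x is constant on {k, k+1, …, l−1}, one has p_k(x) + q_l(x) ≥ q_k(x) + p_l(x). Then (G^flip f_CD)(x) ≤ s̄ − s̄·|y|/2. -/

import Mathlib

open scoped BigOperators

/- Half-integers `k ∈ ℤ + 1/2` are represented by integers `j`, via `k = j + 1/2`.
A height configuration is a function `x : ℤ → ℤ` with values in `{0,1}`,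
eventually constant in both directions with different limiting values. -/
def IsHeight (x : ℤ → ℤ) : Prop :=
  (∀ k, x k = 0 ∨ x k = 1) ∧
  ∃ a b : ℤ, a ≠ b ∧ (∃ N : ℤ, ∀ k ≤ N, x k = a) ∧ (∃ M : ℤ, ∀ k, M ≤ k → x k = b)

/-- The interface of a height configuration: `y i = x (i+1/2) - x (i-1/2)`. -/
def itf (x : ℤ → ℤ) : ℤ → ℤ := fun i => x i - x (i - 1)

/-- The charge of a particle configuration. -/
noncomputable def charge (y : ℤ → ℤ) : ℤ := ∑ᶠ i, y i

/-- The particle number of a particle configuration. -/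
noncomputable def pnum (y : ℤ → ℤ) : ℤ := ∑ᶠ i, |y i|

/-- `κ = (1 + ch(y))/2`. -/
noncomputable def kappa (x : ℤ → ℤ) : ℤ := (1 + charge (itf x)) / 2

/-- The inversion count `f_CD`. -/
noncomputable def fCD (x : ℤ → ℤ) : ℕ :=
  Nat.card {p : ℤ × ℤ // p.1 < p.2 ∧ x p.1 = kappa x ∧ x p.2 = 1 - kappa x}

/-- Flip the height at position `k`. -/
def flipAt (x : ℤ → ℤ) (k : ℤ) : ℤ → ℤ := Function.update x k (1 - x k)

/-- Interchange the heights at positions `k` and `k+1`. -/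
def swapAt (x : ℤ → ℤ) (k : ℤ) : ℤ → ℤ :=
  fun j => if j = k then x (k + 1) else if j = k + 1 then x k else x j

/-- `S(k) = Σ_{l<k} 1{x_l = κ} − Σ_{l>k} 1{x_l = 1−κ}`. -/
noncomputable def Sfun (x : ℤ → ℤ) (k : ℤ) : ℤ :=
  (Nat.card {l : ℤ // l < k ∧ x l = kappa x} : ℤ)
    - (Nat.card {l : ℤ // k < l ∧ x l = 1 - kappa x} : ℤ)

/-- The spin-flip part of the generator applied to `f_CD`. -/
noncomputable def Gflip (p q : ℤ → ℝ) (x : ℤ → ℤ) : ℝ :=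
  ∑ᶠ k : ℤ, (p k + q (k + 1)) * ((fCD (flipAt x k) : ℝ) - (fCD x : ℝ))

/-- The exclusion part of the generator applied to `f_CD`. -/
noncomputable def Gexcl (bp bm : ℤ → ℝ) (x : ℤ → ℤ) : ℝ :=
  ∑ᶠ k : ℤ,
    ((if x k = 0 ∧ x (k + 1) = 1 then bp (k + 1) else 0)
      + (if x k = 1 ∧ x (k + 1) = 0 then bm (k + 1) else 0))
    * ((fCD (swapAt x k) : ℝ) - (fCD x : ℝ))

open Finset

/-- Bundled hypotheses. -/
def HT (x : ℤ → ℤ) (a b N M : ℤ) : Prop :=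
  (∀ k, x k = 0 ∨ x k = 1) ∧ a + b = 1 ∧ (∀ k ≤ N, x k = a) ∧ (∀ k, M ≤ k → x k = b) ∧ N < M

lemma HT.ne (h : HT x a b N M) : a ≠ b := by
  obtain ⟨-, hab, -, -, -⟩ := h; omega

lemma Ioc_insert_top {u v : ℤ} (h : u ≤ v) :
    Finset.Ioc u (v+1) = insert (v+1) (Finset.Ioc u v) := by
  ext m; simp only [Finset.mem_Ioc, Finset.mem_insert]; omega

lemma tele_nat (g : ℤ → ℤ) (u : ℤ) : ∀ (n : ℕ), ∑ i ∈ Finset.Ioc u (u + n), (g i - g (i-1)) = g (u + n) - g u := by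
  intro n
  induction n with
  | zero => simp
  | succ n ih =>
      have h : (u + ((n:ℕ)+1:ℕ) : ℤ) = (u + n) + 1 := by push_cast; ring
      rw [h, Ioc_insert_top (by omega), Finset.sum_insert (by simp), ih]
      have h2 : u + (n:ℤ) + 1 - 1 = u + n := by ring
      rw [h2]; ring

lemma tele (g : ℤ → ℤ) (u v : ℤ) (hv : u ≤ v) :
    ∑ i ∈ Finset.Ioc u v, (g i - g (i-1)) = g v - g u := by
  obtain ⟨n, rfl⟩ := Int.le.dest hv
  exact tele_nat g u n

lemma charge_eq (h : HT x a b N M) : charge (itf x) = b - a := by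
  obtain ⟨hx01, hab, hN, hM, hNM⟩ := h
  have hsupp : Function.support (itf x) ⊆ ↑(Finset.Ioc N M) := by
    intro i hi
    simp only [Finset.coe_Ioc, Set.mem_Ioc]
    by_contra hcon
    push_neg at hcon
    apply hi
    show x i - x (i-1) = 0
    rcases le_or_gt i N with h1 | h1
    · rw [hN i h1, hN (i-1) (by omega)]; ring
    · have := hcon h1
      rw [hM i (by omega), hM (i-1) (by omega)]; ring
  rw [charge, finsum_eq_finset_sum_of_support_subset _ hsupp]
  simp only [itf]
  rw [tele x N M (le_of_lt hNM), hN N le_rfl, hM M le_rfl]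

lemma kappa_eq (h : HT x a b N M) : kappa x = b := by
  have h1 := charge_eq h
  have h2 := h.2.1
  rw [kappa, h1]
  have h3 : 1 + (b - a) = 2 * b := by omega
  rw [h3]
  omega

lemma one_sub_kappa (h : HT x a b N M) : 1 - kappa x = a := by
  have := h.2.1
  rw [kappa_eq h]; omega

/-- number of b-sites strictly below k -/
noncomputable def cntb (x : ℤ → ℤ) (b N k : ℤ) : ℕ :=
  ((Finset.Ioo N k).filter (fun l => x l = b)).card
/-- number of a-sites strictly above k -/
noncomputable def cnta (x : ℤ → ℤ) (a M k : ℤ) : ℕ :=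
  ((Finset.Ioo k M).filter (fun l => x l = a)).card

lemma card_below (h : HT x a b N M) (k : ℤ) :
    Nat.card {l : ℤ // l < k ∧ x l = kappa x} = cntb x b N k := by
  have hk := kappa_eq h
  have hset : {l : ℤ | l < k ∧ x l = kappa x}
      = ↑((Finset.Ioo N k).filter (fun l => x l = b)) := by
    ext l
    simp only [Set.mem_setOf_eq, Finset.coe_filter, Finset.mem_Ioo, hk]
    constructor
    · rintro ⟨h1, h2⟩
      refine ⟨⟨?_, h1⟩, h2⟩
      by_contra hcon
      push_neg at hcon
      rw [h.2.2.1 l hcon] at h2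
      exact h.ne h2
    · rintro ⟨⟨-, h1⟩, h2⟩; exact ⟨h1, h2⟩
  calc Nat.card {l : ℤ // l < k ∧ x l = kappa x}
      = Set.ncard {l : ℤ | l < k ∧ x l = kappa x} := (Nat.card_coe_set_eq _)
    _ = _ := by rw [hset, Set.ncard_coe_finset]; rfl
lemma card_above (h : HT x a b N M) (k : ℤ) :
    Nat.card {l : ℤ // k < l ∧ x l = 1 - kappa x} = cnta x a M k := by
  have hk := one_sub_kappa h
  have hset : {l : ℤ | k < l ∧ x l = 1 - kappa x}
      = ↑((Finset.Ioo k M).filter (fun l => x l = a)) := by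
    ext l
    simp only [Set.mem_setOf_eq, Finset.coe_filter, Finset.mem_Ioo, hk]
    constructor
    · rintro ⟨h1, h2⟩
      refine ⟨⟨h1, ?_⟩, h2⟩
      by_contra hcon
      push_neg at hcon
      rw [h.2.2.2.1 l hcon] at h2
      exact h.ne h2.symm
    · rintro ⟨⟨h1, -⟩, h2⟩; exact ⟨h1, h2⟩
  calc Nat.card {l : ℤ // k < l ∧ x l = 1 - kappa x}
      = Set.ncard {l : ℤ | k < l ∧ x l = 1 - kappa x} := (Nat.card_coe_set_eq _)
    _ = _ := by rw [hset, Set.ncard_coe_finset]; rfl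

lemma sfun_eq (h : HT x a b N M) (k : ℤ) :
    Sfun x k = (cntb x b N k : ℤ) - (cnta x a M k : ℤ) := by
  rw [Sfun, card_below h, card_above h]

lemma fcd_eq (h : HT x a b N M) :
    fCD x = (((Finset.Ioo N M) ×ˢ (Finset.Ioo N M)).filter
      (fun p => p.1 < p.2 ∧ x p.1 = b ∧ x p.2 = a)).card := by
  have hk := kappa_eq h
  have hba : (1:ℤ) - b = a := by have := h.2.1; omega
  have hset : {p : ℤ × ℤ | p.1 < p.2 ∧ x p.1 = kappa x ∧ x p.2 = 1 - kappa x}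
      = ↑(((Finset.Ioo N M) ×ˢ (Finset.Ioo N M)).filter
      (fun p => p.1 < p.2 ∧ x p.1 = b ∧ x p.2 = a)) := by
    ext p
    simp only [Set.mem_setOf_eq, Finset.coe_filter, Finset.mem_product, Finset.mem_Ioo, hk, hba]
    constructor
    · rintro ⟨h1, h2, h3⟩
      have hp1N : N < p.1 := by
        by_contra hcon; push_neg at hcon
        rw [h.2.2.1 p.1 hcon] at h2; exact h.ne h2
      have hp2M : p.2 < M := by
        by_contra hcon; push_neg at hcon
        rw [h.2.2.2.1 p.2 hcon] at h3; exact h.ne h3.symm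
      exact ⟨⟨⟨hp1N, by omega⟩, ⟨by omega, hp2M⟩⟩, h1, h2, h3⟩
    · rintro ⟨-, h1, h2, h3⟩; exact ⟨h1, h2, h3⟩
  calc fCD x = Set.ncard {p : ℤ × ℤ | p.1 < p.2 ∧ x p.1 = kappa x ∧ x p.2 = 1 - kappa x} :=
        (Nat.card_coe_set_eq _)
    _ = _ := by rw [hset, Set.ncard_coe_finset]

-- ============ chunk 2 ============

lemma const_nat (x : ℤ → ℤ) (u : ℤ) :
    ∀ n : ℕ, (∀ m, u < m → m ≤ u + n → x (m-1) = x m) → x u = x (u + n) := by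
  intro n
  induction n with
  | zero => simp
  | succ n ih =>
      intro hc
      have h1 : x u = x (u + n) := ih (fun m h1 h2 => hc m h1 (by push_cast; push_cast at h2; omega))
      have h2 : x (u + n + 1 - 1) = x (u + n + 1) := hc (u + n + 1) (by omega) (by push_cast; omega)
      have h3 : u + (n:ℤ) + 1 - 1 = u + n := by ring
      rw [h3] at h2
      have h4 : u + ((n:ℕ)+1:ℕ) = u + (n:ℤ) + 1 := by push_cast; ring
      rw [h4, ← h2, h1]

lemma const_of_no_itf (x : ℤ → ℤ) (u v : ℤ) (huv : u ≤ v)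
    (hc : ∀ m, u < m → m ≤ v → x (m-1) = x m) : x u = x v := by
  obtain ⟨n, rfl⟩ := Int.le.dest huv
  exact const_nat x u n hc

lemma filter_card_insert (s : Finset ℤ) (c : ℤ) (hc : c ∉ s) (P : ℤ → Prop) [DecidablePred P] :
    ((insert c s).filter P).card = (s.filter P).card + (if P c then 1 else 0) := by
  rw [Finset.filter_insert]
  split_ifs with h
  · rw [Finset.card_insert_of_notMem (fun hmem => hc (Finset.mem_of_mem_filter _ hmem))]
  · rfl

lemma cntb_step (h : HT x a b N M) (m : ℤ) :
    (cntb x b N m : ℤ) = cntb x b N (m-1) + (if x (m-1) = b then 1 else 0) := by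
  rcases lt_or_ge N (m-1) with h1 | h1
  · have hIoo : Finset.Ioo N m = insert (m-1) (Finset.Ioo N (m-1)) := by
      ext l; simp only [Finset.mem_Ioo, Finset.mem_insert]; omega
    rw [cntb, cntb, hIoo, filter_card_insert _ _ (by simp)]
    push_cast
    split_ifs <;> norm_num
  · have hIoo1 : Finset.Ioo N m = ∅ := by
      ext l; simp only [Finset.mem_Ioo, Finset.notMem_empty, iff_false]; omega
    have hIoo2 : Finset.Ioo N (m-1) = ∅ := by
      ext l; simp only [Finset.mem_Ioo, Finset.notMem_empty, iff_false]; omega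
    have hxa : x (m-1) = a := h.2.2.1 _ (by omega)
    have hne : x (m-1) ≠ b := by rw [hxa]; exact h.ne
    rw [cntb, cntb, hIoo1, hIoo2, if_neg hne]
    simp

lemma cnta_step (h : HT x a b N M) (m : ℤ) :
    (cnta x a M (m-1) : ℤ) = cnta x a M m + (if x m = a then 1 else 0) := by
  rcases lt_or_ge m M with h1 | h1
  · have hIoo : Finset.Ioo (m-1) M = insert m (Finset.Ioo m M) := by
      ext l; simp only [Finset.mem_Ioo, Finset.mem_insert]; omega
    rw [cnta, cnta, hIoo, filter_card_insert _ _ (by simp)]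
    push_cast
    split_ifs <;> norm_num
  · have hIoo1 : Finset.Ioo (m-1) M = ∅ := by
      ext l; simp only [Finset.mem_Ioo, Finset.notMem_empty, iff_false]; omega
    have hIoo2 : Finset.Ioo m M = ∅ := by
      ext l; simp only [Finset.mem_Ioo, Finset.notMem_empty, iff_false]; omega
    have hxb : x m = b := h.2.2.2.1 _ (by omega)
    have hne : x m ≠ a := by rw [hxb]; exact fun hh => h.ne hh.symm
    rw [cnta, cnta, hIoo1, hIoo2, if_neg hne]
    simp

lemma sfun_step (h : HT x a b N M) (m : ℤ) :
    Sfun x m - Sfun x (m-1)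
      = (if x (m-1) = b then (1:ℤ) else 0) + (if x m = a then (1:ℤ) else 0) := by
  rw [sfun_eq h, sfun_eq h, cntb_step h m, cnta_step h m]
  split_ifs <;> ring

lemma sfun_tele (h : HT x a b N M) (u v : ℤ) (huv : u ≤ v) :
    Sfun x v - Sfun x u = ∑ m ∈ Finset.Ioc u v,
      ((if x (m-1) = b then (1:ℤ) else 0) + (if x m = a then (1:ℤ) else 0)) := by
  rw [← tele (Sfun x) u v huv]
  exact Finset.sum_congr rfl (fun m _ => (sfun_step h m))

lemma sum_ite_card (s : Finset ℤ) (P : ℤ → Prop) [DecidablePred P] :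
    ∑ v ∈ s, (if P v then (1:ℤ) else 0) = ((s.filter P).card : ℤ) := by
  rw [Finset.card_filter]
  push_cast
  rfl

lemma HT.weaken (h : HT x a b N M) : HT x a b (N-1) (M+1) := by
  obtain ⟨h1, h2, h3, h4, h5⟩ := h
  exact ⟨h1, h2, fun k hk => h3 k (by omega), fun k hk => h4 k (by omega), by omega⟩

lemma HT.flip (h : HT x a b N M) (k : ℤ) (hk : k ∈ Finset.Icc N M) :
    HT (flipAt x k) a b (N-1) (M+1) := by
  obtain ⟨h1, h2, h3, h4, h5⟩ := h
  simp only [Finset.mem_Icc] at hk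
  refine ⟨?_, h2, ?_, ?_, by omega⟩
  · intro j
    by_cases hj : j = k
    · subst hj
      simp only [flipAt, Function.update_self]
      rcases h1 j with hh | hh <;> rw [hh] <;> norm_num
    · simpa only [flipAt, Function.update_of_ne hj] using h1 j
  · intro j hj
    rw [flipAt, Function.update_of_ne (by omega)]
    exact h3 j (by omega)
  · intro j hj
    rw [flipAt, Function.update_of_ne (by omega)]
    exact h4 j (by omega)

lemma flip_diff (h : HT x a b N M) (k : ℤ) (hk : k ∈ Finset.Icc N M) :
    (fCD (flipAt x k) : ℤ) - (fCD x : ℤ) = (if x k = b then 1 else -1) * Sfun x k := by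
  set x' : ℤ → ℤ := flipAt x k with hx'
  have h' : HT x a b (N-1) (M+1) := h.weaken
  have hf : HT x' a b (N-1) (M+1) := h.flip k hk
  simp only [Finset.mem_Icc] at hk
  set B : Finset ℤ := Finset.Ioo (N-1) (M+1) with hB
  have hkB : k ∈ B := by simp only [hB, Finset.mem_Ioo]; omega
  have hx'k : x' k = 1 - x k := by rw [hx', flipAt, Function.update_self]
  have hx'ne : ∀ v, v ≠ k → x' v = x v := fun v hv => by
    rw [hx', flipAt, Function.update_of_ne hv]
  have e0 : ∀ (z : ℤ → ℤ), HT z a b (N-1) (M+1) →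
      (fCD z : ℤ) = ∑ u ∈ B, ∑ v ∈ B, (if u < v ∧ z u = b ∧ z v = a then (1:ℤ) else 0) := by
    intro z hz
    rw [fcd_eq hz, Finset.card_filter]
    push_cast
    rw [← Finset.sum_product']
  rw [e0 x h', e0 x' hf, ← Finset.sum_sub_distrib]
  simp only [← Finset.sum_sub_distrib]
  have hsplit : ∀ (G : ℤ → ℤ), (∑ u ∈ B, G u) = G k + ∑ u ∈ B.erase k, G u :=
    fun G => (Finset.add_sum_erase B G hkB).symm
  rw [hsplit]
  have hinner : ∀ u ∈ B.erase k,
      (∑ v ∈ B, ((if u < v ∧ x' u = b ∧ x' v = a then (1:ℤ) else 0)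
        - (if u < v ∧ x u = b ∧ x v = a then (1:ℤ) else 0)))
      = ((if u < k ∧ x u = b ∧ x' k = a then (1:ℤ) else 0)
        - (if u < k ∧ x u = b ∧ x k = a then (1:ℤ) else 0)) := by
    intro u hu
    have huk : u ≠ k := (Finset.mem_erase.mp hu).1
    rw [hsplit, hx'ne u huk]
    have hz : ∑ v ∈ B.erase k, ((if u < v ∧ x u = b ∧ x' v = a then (1:ℤ) else 0)
        - (if u < v ∧ x u = b ∧ x v = a then (1:ℤ) else 0)) = 0 := by
      apply Finset.sum_eq_zero
      intro v hv
      rw [hx'ne v (Finset.mem_erase.mp hv).1]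
      ring
    rw [hz]
    ring
  rw [Finset.sum_congr rfl hinner]
  -- the two filter-set identifications
  have hfs1 : B.filter (fun v => k < v ∧ x v = a) = (Finset.Ioo k M).filter (fun l => x l = a) := by
    ext v
    simp only [Finset.mem_filter, Finset.mem_Ioo, hB]
    constructor
    · rintro ⟨⟨-, hvM⟩, hkv, hva⟩
      have hvne : v ≠ M := fun hh => h.ne ((hh ▸ hva).symm.trans (h.2.2.2.1 M le_rfl))
      exact ⟨⟨hkv, by omega⟩, hva⟩
    · rintro ⟨⟨hkv, hvM⟩, hva⟩
      exact ⟨⟨by omega, by omega⟩, hkv, hva⟩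
  have hfs2 : (B.erase k).filter (fun u => u < k ∧ x u = b)
      = (Finset.Ioo N k).filter (fun l => x l = b) := by
    ext u
    simp only [Finset.mem_filter, Finset.mem_erase, Finset.mem_Ioo, hB]
    constructor
    · rintro ⟨⟨hukne, huB1, -⟩, huk, hub⟩
      have hNu : N < u := by
        by_contra hcon
        push_neg at hcon
        exact h.ne ((h.2.2.1 u hcon).symm.trans hub)
      exact ⟨⟨hNu, huk⟩, hub⟩
    · rintro ⟨⟨hNu, huk⟩, hub⟩
      exact ⟨⟨by omega, by omega, by omega⟩, huk, hub⟩
  have hcnta : ∑ v ∈ B, (if k < v ∧ x v = a then (1:ℤ) else 0) = (cnta x a M k : ℤ) := by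
    rw [sum_ite_card, hfs1, cnta]
  have hcntb : ∑ u ∈ B.erase k, (if u < k ∧ x u = b then (1:ℤ) else 0) = (cntb x b N k : ℤ) := by
    rw [sum_ite_card, hfs2, cntb]
  have hxk01 := h.1 k
  have hab := h.2.1
  have ha01 : a = 0 ∨ a = 1 := by
    have h1 := h.1 N
    have h2 := h.2.2.1 N le_rfl
    omega
  rcases (by omega : x k = a ∨ x k = b) with hxk | hxk
  · -- x k = a, x' k = b
    have hx'kb : x' k = b := by rw [hx'k, hxk]; omega
    have t1 : ∑ v ∈ B, ((if k < v ∧ x' k = b ∧ x' v = a then (1:ℤ) else 0)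
        - (if k < v ∧ x k = b ∧ x v = a then (1:ℤ) else 0))
        = (cnta x a M k : ℤ) := by
      rw [← hcnta]
      apply Finset.sum_congr rfl
      intro v hv
      have h2 : ¬ (k < v ∧ x k = b ∧ x v = a) := by
        rintro ⟨-, hh, -⟩; rw [hxk] at hh; exact h.ne hh
      rw [if_neg h2]
      by_cases hvk : v = k
      · have hlt : ¬ (k < v) := by omega
        rw [if_neg (fun hh => hlt hh.1), if_neg (fun hh => hlt hh.1)]
        ring
      · rw [hx'ne v hvk, hx'kb]
        by_cases h3 : k < v ∧ x v = a
        · rw [if_pos ⟨h3.1, rfl, h3.2⟩, if_pos h3]; ring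
        · rw [if_neg (fun hh => h3 ⟨hh.1, hh.2.2⟩), if_neg h3]; ring
    have t2 : ∑ u ∈ B.erase k, ((if u < k ∧ x u = b ∧ x' k = a then (1:ℤ) else 0)
        - (if u < k ∧ x u = b ∧ x k = a then (1:ℤ) else 0))
        = -(cntb x b N k : ℤ) := by
      rw [← hcntb, ← Finset.sum_neg_distrib]
      apply Finset.sum_congr rfl
      intro u hu
      rw [if_neg (fun hh => h.ne (hx'kb.symm.trans hh.2.2).symm)]
      by_cases h3 : u < k ∧ x u = b
      · rw [if_pos ⟨h3.1, h3.2, hxk⟩, if_pos h3]; ring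
      · rw [if_neg (fun hh => h3 ⟨hh.1, hh.2.1⟩), if_neg h3]; ring
    rw [t1, t2, if_neg (fun hh => h.ne (hxk.symm.trans hh)), sfun_eq h]
    ring
  · -- x k = b, x' k = a
    have hx'ka : x' k = a := by rw [hx'k, hxk]; omega
    have t1 : ∑ v ∈ B, ((if k < v ∧ x' k = b ∧ x' v = a then (1:ℤ) else 0)
        - (if k < v ∧ x k = b ∧ x v = a then (1:ℤ) else 0))
        = -(cnta x a M k : ℤ) := by
      rw [← hcnta, ← Finset.sum_neg_distrib]
      apply Finset.sum_congr rfl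
      intro v hv
      have h1 : ¬ (k < v ∧ x' k = b ∧ x' v = a) := by
        rintro ⟨-, hh, -⟩; rw [hx'ka] at hh; exact h.ne hh
      rw [if_neg h1]
      by_cases hvk : v = k
      · have hlt : ¬ (k < v) := by omega
        rw [if_neg (fun hh => hlt hh.1), if_neg (fun hh => hlt hh.1)]
        ring
      · by_cases h3 : k < v ∧ x v = a
        · rw [if_pos ⟨h3.1, hxk, h3.2⟩, if_pos h3]; ring
        · rw [if_neg (fun hh => h3 ⟨hh.1, hh.2.2⟩), if_neg h3]; ring
    have t2 : ∑ u ∈ B.erase k, ((if u < k ∧ x u = b ∧ x' k = a then (1:ℤ) else 0)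
        - (if u < k ∧ x u = b ∧ x k = a then (1:ℤ) else 0))
        = (cntb x b N k : ℤ) := by
      rw [← hcntb]
      apply Finset.sum_congr rfl
      intro u hu
      have h2 : ¬ (u < k ∧ x u = b ∧ x k = a) := by
        rintro ⟨-, -, hh⟩; rw [hxk] at hh; exact h.ne hh.symm
      rw [if_neg h2]
      by_cases h3 : u < k ∧ x u = b
      · rw [if_pos ⟨h3.1, h3.2, hx'ka⟩, if_pos h3]; ring
      · rw [if_neg (fun hh => h3 ⟨hh.1, hh.2.1⟩), if_neg h3]; ring
    rw [t1, t2, if_pos hxk, sfun_eq h]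
    ring

-- ============ chunk 3 : assembly ============

lemma altsum_ge (t : ℕ) (d : ℕ → ℝ) (hd : ∀ j k, j ≤ k → k ≤ 2*t → d k ≤ d j) :
    d (2*t) ≤ ∑ j ∈ range (2*t+1), (-1:ℝ)^j * d j := by
  induction t with
  | zero => simp
  | succ t ih =>
      have ih' := ih (fun j k hjk hk => hd j k hjk (by omega))
      have e1 : (2*(t+1)+1) = (2*t+1) + 1 + 1 := by ring
      rw [e1, Finset.sum_range_succ, Finset.sum_range_succ]
      have hp1 : (-1:ℝ)^(2*t+1) = -1 := by rw [pow_succ, pow_mul]; norm_num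
      have hp2 : (-1:ℝ)^(2*t+1+1) = 1 := by rw [pow_succ, hp1]; norm_num
      rw [hp1, hp2]
      have h2 : d (2*t+1) ≤ d (2*t) := hd _ _ (by omega) (by omega)
      have h3 : d (2*(t+1)) ≤ d (2*t+1) := hd _ _ (by omega) (by omega)
      have e2 : 2*t+1+1 = 2*(t+1) := by ring
      rw [e2]
      linarith

lemma core (sbar : ℝ) (hs : 0 < sbar) :
    ∀ (t : ℕ) (P Q : ℕ → ℝ) (U : ℕ → ℤ),
    (∀ j k, j ≤ k → k ≤ 2*t → P k - Q k ≤ P j - Q j) →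
    (∀ j, j ≤ 2*t → 0 ≤ P j) →
    (∀ j, j ≤ 2*t → 0 ≤ Q j) →
    (∀ j, j ≤ 2*t → sbar ≤ P j + Q j) →
    (∀ j, j < 2*t → Even j → U j ≤ U (j+1)) →
    (∀ j, j < 2*t → Odd j → U j + 2 ≤ U (j+1)) →
    (U (2*t) = ∑ j ∈ (Finset.range (2*t)).filter (fun j => Even j), (U (j+1) - U j + 1)) →
    ∑ j ∈ Finset.range (2*t+1), (-1:ℝ)^j * (P j - Q j) * (U j : ℝ)
      - 2 * ∑ j ∈ (Finset.range (2*t+1)).filter (fun j => Odd j), P j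
      ≤ sbar * (2 - (2*t+1 : ℝ)) / 2 := by
  intro t
  induction t with
  | zero =>
      intro P Q U hd hP hQ hPQ he ho hanchor
      have h0 : U 0 = 0 := by simpa using hanchor
      simp [Finset.sum_range_succ, h0, Finset.filter_singleton]
      linarith
  | succ t ih =>
      intro P Q U hd hP hQ hPQ he ho hanchor
      have ht2 : 2*(t+1) = 2*t+2 := by ring
      rw [ht2] at hanchor
      set c : ℤ := U (2*t+2) - U (2*t+1) - 1 with hc
      have hc1 : 1 ≤ c := by
        have h := ho (2*t+1) (by omega) (odd_two_mul_add_one t)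
        rw [show 2*t+1+1 = 2*t+2 from by ring] at h
        omega
      set U' : ℕ → ℤ := fun j => U j + c with hU'
      have hrng : range (2*t+2) = insert (2*t+1) (insert (2*t) (range (2*t))) := by
        rw [Finset.range_add_one, Finset.range_add_one]
      have hanch2 : (range (2*t+2)).filter (fun j => Even j)
          = insert (2*t) ((range (2*t)).filter (fun j => Even j)) := by
        rw [hrng, Finset.filter_insert, Finset.filter_insert]
        have h1 : ¬ Even (2*t+1) := by rw [Nat.even_iff]; omega
        have h2 : Even (2*t) := even_two_mul t
        simp [h1, h2]
      have hnotmem : (2*t) ∉ (range (2*t)).filter (fun j => Even j) := by simp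
      have hanchor' : U' (2*t) = ∑ j ∈ (range (2*t)).filter (fun j => Even j),
          (U' (j+1) - U' j + 1) := by
        rw [hanch2, Finset.sum_insert hnotmem] at hanchor
        show U (2*t) + c = _
        have hcg : ∀ j ∈ (range (2*t)).filter (fun j => Even j),
            (U' (j+1) - U' j + 1) = (U (j+1) - U j + 1) := by
          intro j hj; show U (j+1) + c - (U j + c) + 1 = _; ring
        rw [Finset.sum_congr rfl hcg]
        rw [show 2*t+1 = 2*t+1 from rfl] at hanchor
        omega
      have ihapp := ih P Q U'
        (fun j k hjk hk => hd j k hjk (by omega))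
        (fun j hj => hP j (by omega)) (fun j hj => hQ j (by omega))
        (fun j hj => hPQ j (by omega))
        (fun j hj hev => by
          show U j + c ≤ U (j+1) + c
          have := he j (by omega) hev; omega)
        (fun j hj hod => by
          show U j + c + 2 ≤ U (j+1) + c
          have := ho j (by omega) hod; omega)
        hanchor'
      have hUtop : (0:ℤ) ≤ U (2*t+2) := by
        rw [hanchor]
        apply Finset.sum_nonneg
        intro j hj
        simp only [Finset.mem_filter, Finset.mem_range] at hj
        have := he j (by omega) hj.2
        omega
      have hR := altsum_ge t (fun j => P j - Q j) (fun j k hjk hk => hd j k hjk (by omega))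
      -- expand target
      have e1 : 2*(t+1)+1 = (2*t+1) + 1 + 1 := by ring
      rw [e1, Finset.sum_range_succ, Finset.sum_range_succ]
      have hoddf : (range (2*t+1+1+1)).filter (fun j => Odd j)
          = insert (2*t+1) ((range (2*t+1)).filter (fun j => Odd j)) := by
        rw [Finset.range_add_one, Finset.range_add_one, Finset.filter_insert, Finset.filter_insert]
        have h1 : ¬ Odd (2*t+1+1) := by rw [Nat.odd_iff]; omega
        have h2 : Odd (2*t+1) := odd_two_mul_add_one t
        simp [h1, h2]
      rw [hoddf, Finset.sum_insert (by simp)]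
      have hp1 : (-1:ℝ)^(2*t+1) = -1 := by rw [pow_succ, pow_mul]; norm_num
      have hp2 : (-1:ℝ)^(2*t+1+1) = 1 := by rw [pow_succ, hp1]; norm_num
      rw [hp1, hp2]
      rw [show 2*t+1+1 = 2*t+2 from by ring]
      have hsum' : ∑ j ∈ range (2*t+1), (-1:ℝ)^j * (P j - Q j) * (U j : ℝ)
          = ∑ j ∈ range (2*t+1), (-1:ℝ)^j * (P j - Q j) * (U' j : ℝ)
            - (c:ℝ) * ∑ j ∈ range (2*t+1), (-1:ℝ)^j * (P j - Q j) := by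
        rw [Finset.mul_sum, ← Finset.sum_sub_distrib]
        apply Finset.sum_congr rfl
        intro j hj
        show _ = (-1:ℝ)^j * (P j - Q j) * ((U j : ℤ) + c : ℤ) - _
        push_cast
        ring
      rw [hsum']
      have hd1 : P (2*t+2) - Q (2*t+2) ≤ P (2*t+1) - Q (2*t+1) := hd _ _ (by omega) (by omega)
      have hd2 : P (2*t+1) - Q (2*t+1) ≤ P (2*t) - Q (2*t) := hd _ _ (by omega) (by omega)
      have hPQ1 := hPQ (2*t+1) (by omega)
      have hUd : (U (2*t+2) : ℝ) - (U (2*t+1) : ℝ) = (c:ℝ) + 1 := by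
        have h : U (2*t+2) - U (2*t+1) = c + 1 := by omega
        have := congrArg (fun z : ℤ => (z : ℝ)) h
        push_cast at this
        linarith
      have hUtopR : (0:ℝ) ≤ (U (2*t+2) : ℝ) := by exact_mod_cast hUtop
      have hcR : (1:ℝ) ≤ (c:ℝ) := by exact_mod_cast hc1
      have key : - ((c:ℝ) * ∑ j ∈ range (2*t+1), (-1:ℝ)^j * (P j - Q j))
          + (-1) * (P (2*t+1) - Q (2*t+1)) * (U (2*t+1):ℝ)
          + (P (2*t+2) - Q (2*t+2)) * (U (2*t+2):ℝ)
          - 2 * P (2*t+1) ≤ - sbar := by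
        have hRc : (c:ℝ) * (P (2*t+1) - Q (2*t+1)) ≤ (c:ℝ) * ∑ j ∈ range (2*t+1), (-1:ℝ)^j * (P j - Q j) := by
          apply mul_le_mul_of_nonneg_left _ (by linarith)
          linarith
        have step1 : (-1) * (P (2*t+1) - Q (2*t+1)) * (U (2*t+1):ℝ)
            + (P (2*t+2) - Q (2*t+2)) * (U (2*t+2):ℝ)
            = ((P (2*t+2) - Q (2*t+2)) - (P (2*t+1) - Q (2*t+1))) * (U (2*t+2):ℝ)
              + (P (2*t+1) - Q (2*t+1)) * ((U (2*t+2):ℝ) - (U (2*t+1):ℝ)) := by ring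
        rw [hUd] at step1
        have t1 : ((P (2*t+2) - Q (2*t+2)) - (P (2*t+1) - Q (2*t+1))) * (U (2*t+2):ℝ) ≤ 0 :=
          mul_nonpos_of_nonpos_of_nonneg (by linarith) hUtopR
        nlinarith [hRc, t1, step1, hPQ1, hd2]
      have goal2 : sbar * (2 - (2*(t:ℝ)+1)) / 2 - sbar = sbar * (2 - (2*((t:ℝ)+1)+1)) / 2 := by ring
      push_cast
      push_cast at ihapp
      nlinarith [ihapp, key, goal2]


lemma parity_sum (t : ℕ) : ∑ j ∈ Finset.range (2*t), (if Even j then (-1:ℤ) else 1) = 0 := by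
  induction t with
  | zero => simp
  | succ t ih =>
      rw [show 2*(t+1) = 2*t+1+1 from by ring, Finset.sum_range_succ, Finset.sum_range_succ, ih]
      have h1 : Even (2*t) := even_two_mul t
      have h2 : ¬ Even (2*t+1) := by rw [Nat.even_iff]; omega
      rw [if_pos h1, if_neg h2]
      ring

/-- Spin-flip contribution bound: `(G^flip f_CD)(x) ≤ s̄ − s̄·|y|/2`. -/
theorem spin_flip_contribution_bound
    (x : ℤ → ℤ) (hx : IsHeight x)
    (p q : ℤ → ℝ)
    (hp : ∀ k, 0 ≤ p k) (hq : ∀ k, 0 ≤ q k)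
    (hrate0 : ∀ k, x (k - 1) = x k → p k = 0 ∧ q k = 0)
    (sbar : ℝ) (hsbar : 0 < sbar)
    (hlow : ∀ k, x (k - 1) ≠ x k → sbar ≤ p k + q k)
    (hA4a : ∀ k l : ℤ, k < l → x (k - 1) ≠ x k → x (l - 1) ≠ x l →
      (∀ m, k ≤ m → m < l → x m = x k) → q k + p l ≤ p k + q l) :
    Gflip p q x ≤ sbar - sbar * (pnum (itf x) : ℝ) / 2 := by
  obtain ⟨hx01, a, b, hne, ⟨N0, hN0⟩, ⟨M0, hM0⟩⟩ := hx
  have ha01 : a = 0 ∨ a = 1 := by have h1 := hN0 N0 le_rfl; have h2 := hx01 N0; omega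
  have hb01 : b = 0 ∨ b = 1 := by have h1 := hM0 M0 le_rfl; have h2 := hx01 M0; omega
  have hab : a + b = 1 := by omega
  set N : ℤ := min N0 (M0 - 1) with hNdef
  set M : ℤ := M0 with hMdef
  have h : HT x a b N M :=
    ⟨hx01, hab, fun k hk => hN0 k (by omega), fun k hk => hM0 k (by omega), by omega⟩
  have hxab : ∀ m, x m = a ∨ x m = b := fun m => by have := hx01 m; omega
  -- interfaces
  set A : Finset ℤ := (Finset.Ioc N M).filter (fun k => ¬ (x (k-1) = x k)) with hA
  have hmemA : ∀ k, k ∈ A ↔ x (k-1) ≠ x k := by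
    intro k
    simp only [hA, Finset.mem_filter, Finset.mem_Ioc]
    constructor
    · rintro ⟨-, hk⟩; exact hk
    · intro hk
      refine ⟨⟨?_, ?_⟩, hk⟩
      · by_contra hcon
        push_neg at hcon
        exact hk ((h.2.2.1 (k-1) (by omega)).trans (h.2.2.1 k (by omega)).symm)
      · by_contra hcon
        push_neg at hcon
        exact hk ((h.2.2.2.1 (k-1) (by omega)).trans (h.2.2.2.1 k (by omega)).symm)
  have hAIoc : ∀ k, k ∈ A → N < k ∧ k ≤ M := by
    intro k hk
    rw [hA, Finset.mem_filter, Finset.mem_Ioc] at hk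
    exact hk.1
  have hAne : A.Nonempty := by
    by_contra hcon
    rw [Finset.not_nonempty_iff_eq_empty] at hcon
    have hcc : x N = x M := by
      apply const_of_no_itf x N M (by omega)
      intro m h1 h2
      by_contra hne2
      have hm : m ∈ A := (hmemA m).mpr hne2
      rw [hcon] at hm
      exact absurd hm (Finset.notMem_empty m)
    rw [h.2.2.1 N le_rfl, h.2.2.2.1 M le_rfl] at hcc
    exact h.ne hcc
  set n : ℕ := A.card with hn
  have hnpos : 0 < n := Finset.card_pos.mpr hAne
  set iso := A.orderIsoOfFin hn.symm with hiso
  set E : ℕ → ℤ := fun j => if hj : j < n then (iso ⟨j, hj⟩ : ℤ) else 0 with hE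
  have hEmem : ∀ j, j < n → E j ∈ A := by
    intro j hj
    simp only [hE, dif_pos hj]
    exact (iso ⟨j, hj⟩).2
  have hEmono : ∀ i j, i < j → j < n → E i < E j := by
    intro i j hij hj
    simp only [hE, dif_pos (lt_trans hij hj), dif_pos hj]
    exact Subtype.coe_lt_coe.mpr (iso.lt_iff_lt.mpr (Fin.mk_lt_mk.mpr hij))
  have hEmono_le : ∀ i j, i ≤ j → j < n → E i ≤ E j := by
    intro i j hij hj
    rcases eq_or_lt_of_le hij with rfl | hlt
    · exact le_rfl
    · exact le_of_lt (hEmono i j hlt hj)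
  have hEsurj : ∀ k, k ∈ A → ∃ j, j < n ∧ E j = k := by
    intro k hk
    refine ⟨(iso.symm ⟨k, hk⟩ : Fin n), (iso.symm ⟨k, hk⟩).isLt, ?_⟩
    simp only [hE, dif_pos (iso.symm ⟨k, hk⟩).isLt]
    have h1 : (⟨((iso.symm ⟨k, hk⟩ : Fin n) : ℕ), (iso.symm ⟨k, hk⟩).isLt⟩ : Fin n)
        = iso.symm ⟨k, hk⟩ := by
      apply Fin.ext; rfl
    rw [h1, OrderIso.apply_symm_apply]
  have hEmin : ∀ k, k ∈ A → E 0 ≤ k := by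
    intro k hk
    obtain ⟨j, hj, rfl⟩ := hEsurj k hk
    exact hEmono_le 0 j (by omega) hj
  have hEmax : ∀ k, k ∈ A → k ≤ E (n-1) := by
    intro k hk
    obtain ⟨j, hj, rfl⟩ := hEsurj k hk
    exact hEmono_le j (n-1) (by omega) (by omega)
  have hbelow : ∀ m, m < E 0 → x m = a := by
    intro m hm
    rcases le_or_gt m N with h1 | h1
    · exact h.2.2.1 m h1
    · have hcc : x N = x m := by
        apply const_of_no_itf x N m (by omega)
        intro m' hm1 hm2
        by_contra hne2
        have := hEmin m' ((hmemA m').mpr hne2)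
        omega
      rw [← hcc]
      exact h.2.2.1 N le_rfl
  have habove : ∀ m, E (n-1) ≤ m → x m = b := by
    intro m hm
    rcases le_or_gt M m with h1 | h1
    · exact h.2.2.2.1 m h1
    · have hcc : x m = x M := by
        apply const_of_no_itf x m M (by omega)
        intro m' hm1 hm2
        by_contra hne2
        have := hEmax m' ((hmemA m').mpr hne2)
        omega
      rw [hcc]
      exact h.2.2.2.1 M le_rfl
  have hnoitf_between : ∀ j m, j + 1 < n → E j < m → m < E (j+1) → x (m-1) = x m := by
    intro j m hj h1 h2
    by_contra hne2
    obtain ⟨i, hi, hEi⟩ := hEsurj m ((hmemA m).mpr hne2)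
    have hgt : j < i := by
      by_contra hcon
      push_neg at hcon
      have := hEmono_le i j hcon (by omega)
      omega
    have hlt2 : i < j + 1 := by
      by_contra hcon
      push_neg at hcon
      have := hEmono_le (j+1) i hcon hi
      omega
    omega
  have hblock : ∀ j m, j + 1 < n → E j ≤ m → m < E (j+1) → x m = x (E j) := by
    intro j m hj h1 h2
    symm
    apply const_of_no_itf x (E j) m h1
    intro m' hm1 hm2
    exact hnoitf_between j m' hj hm1 (by omega)
  have haltern : ∀ j, j < n → x (E j) = (if Even j then b else a) := by
    intro j
    induction j with
    | zero =>
        intro hj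
        rw [if_pos Even.zero]
        have h1 : x (E 0 - 1) = a := hbelow _ (by omega)
        have h2 : x (E 0 - 1) ≠ x (E 0) := (hmemA _).mp (hEmem 0 hj)
        rcases hxab (E 0) with hh | hh
        · exact absurd (h1.trans hh.symm) h2
        · exact hh
    | succ j ih =>
        intro hj
        have hprev := ih (by omega)
        have hEj1 : E j < E (j+1) := hEmono j (j+1) (by omega) hj
        have hc : x (E (j+1) - 1) = x (E j) := by
          rcases eq_or_lt_of_le (by omega : E j ≤ E (j+1) - 1) with heq | hlt
          · rw [← heq]
          · exact hblock j (E (j+1) - 1) hj (by omega) (by omega)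
        have h2 : x (E (j+1) - 1) ≠ x (E (j+1)) := (hmemA _).mp (hEmem (j+1) hj)
        rw [hc, hprev] at h2
        rcases Nat.even_or_odd j with hev | hod
        · rw [if_pos hev] at h2
          rw [if_neg (by rw [Nat.even_iff] at hev ⊢; omega)]
          rcases hxab (E (j+1)) with hh | hh
          · exact hh
          · exact absurd hh.symm h2
        · rw [if_neg (by rw [Nat.odd_iff] at hod; rw [Nat.even_iff]; omega)] at h2
          rw [if_pos (by rw [Nat.odd_iff] at hod; rw [Nat.even_iff]; omega)]
          rcases hxab (E (j+1)) with hh | hh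
          · exact absurd hh.symm h2
          · exact hh
  have haltern' : ∀ j, j < n → x (E j - 1) = (if Even j then a else b) := by
    intro j hj
    have h2 : x (E j - 1) ≠ x (E j) := (hmemA _).mp (hEmem j hj)
    have h3 := haltern j hj
    rcases Nat.even_or_odd j with hev | hod
    · rw [if_pos hev] at h3
      rw [if_pos hev]
      rcases hxab (E j - 1) with hh | hh
      · exact hh
      · exact absurd (hh.trans h3.symm) h2
    · have hev' : ¬ Even j := by rw [Nat.odd_iff] at hod; rw [Nat.even_iff]; omega
      rw [if_neg hev'] at h3
      rw [if_neg hev']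
      rcases hxab (E j - 1) with hh | hh
      · exact absurd (hh.trans h3.symm) h2
      · exact hh
  have hlast : x (E (n-1)) = b := habove _ le_rfl
  have hnodd : n % 2 = 1 := by
    by_contra hcon
    have h1 := haltern (n-1) (by omega)
    have hev : ¬ Even (n-1) := by rw [Nat.even_iff]; omega
    rw [if_neg hev, hlast] at h1
    exact h.ne h1.symm
  obtain ⟨t, ht⟩ : ∃ t, n = 2*t+1 := ⟨n/2, by omega⟩
  -- pnum
  have hpnum : pnum (itf x) = (n : ℤ) := by
    have hsupp : Function.support (fun i => |itf x i|) ⊆ ↑A := by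
      intro i hi
      rw [Finset.mem_coe, hmemA]
      intro hcon
      apply hi
      show |x i - x (i-1)| = 0
      rw [← hcon]
      simp
    rw [pnum, finsum_eq_finset_sum_of_support_subset _ hsupp]
    have hone : ∀ i ∈ A, |itf x i| = 1 := by
      intro i hi
      have hne2 := (hmemA i).mp hi
      have h1 := hx01 i
      have h2 := hx01 (i-1)
      have : x i - x (i-1) = 1 ∨ x i - x (i-1) = -1 := by omega
      show |x i - x (i-1)| = 1
      rcases this with hh | hh <;> rw [hh] <;> norm_num
    rw [Finset.sum_congr rfl hone, Finset.sum_const, hn]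
    simp
  -- Gflip reduction
  set D : ℤ → ℝ := fun k => (fCD (flipAt x k) : ℝ) - (fCD x : ℝ) with hD
  have hsupp : Function.support (fun k => (p k + q (k+1)) * D k) ⊆ ↑(Finset.Icc N M) := by
    intro k hk
    simp only [Finset.coe_Icc, Set.mem_Icc]
    by_contra hcon
    rw [not_and_or] at hcon
    push_neg at hcon
    apply hk
    have hp0 : p k = 0 ∧ q k = 0 := by
      apply hrate0
      rcases hcon with h1 | h1
      · rw [h.2.2.1 (k-1) (by omega), h.2.2.1 k (by omega)]
      · rw [h.2.2.2.1 (k-1) (by omega), h.2.2.2.1 k (by omega)]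
    have hq0 : p (k+1) = 0 ∧ q (k+1) = 0 := by
      apply hrate0
      rcases hcon with h1 | h1
      · rw [h.2.2.1 (k+1-1) (by omega), h.2.2.1 (k+1) (by omega)]
      · rw [h.2.2.2.1 (k+1-1) (by omega), h.2.2.2.1 (k+1) (by omega)]
    show (p k + q (k+1)) * D k = 0
    rw [hp0.1, hq0.2]
    ring
  have hGf : Gflip p q x = ∑ k ∈ Finset.Icc N M, (p k + q (k+1)) * D k :=
    finsum_eq_finset_sum_of_support_subset _ hsupp
  have hGf2 : Gflip p q x
      = (∑ k ∈ Finset.Icc N M, p k * D k) + ∑ k ∈ Finset.Icc N M, q (k+1) * D k := by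
    rw [hGf, ← Finset.sum_add_distrib]
    apply Finset.sum_congr rfl
    intro k _
    ring
  have hmap : ∑ k ∈ Finset.Icc N M, q (k+1) * D k
      = ∑ k ∈ Finset.Icc (N+1) (M+1), q k * D (k-1) := by
    rw [show Finset.Icc (N+1) (M+1) = (Finset.Icc N M).map (addRightEmbedding 1) from
      (map_add_right_Icc N M 1).symm]
    rw [Finset.sum_map]
    apply Finset.sum_congr rfl
    intro k _
    simp only [addRightEmbedding_apply]
    have : k + 1 - 1 = k := by ring
    rw [this]
  have hres1 : ∑ k ∈ Finset.Icc N M, p k * D k = ∑ k ∈ A, p k * D k := by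
    symm
    apply Finset.sum_subset
    · intro k hk
      have := hAIoc k hk
      simp only [Finset.mem_Icc]
      omega
    · intro k hk1 hk2
      have hpk : p k = 0 := by
        apply (hrate0 k _).1
        by_contra hne2
        exact hk2 ((hmemA k).mpr hne2)
      rw [hpk]
      ring
  have hres2 : ∑ k ∈ Finset.Icc (N+1) (M+1), q k * D (k-1) = ∑ k ∈ A, q k * D (k-1) := by
    symm
    apply Finset.sum_subset
    · intro k hk
      have := hAIoc k hk
      simp only [Finset.mem_Icc]
      omega
    · intro k hk1 hk2
      have hqk : q k = 0 := by
        apply (hrate0 k _).2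
        by_contra hne2
        exact hk2 ((hmemA k).mpr hne2)
      rw [hqk]
      ring
  have hGf3 : Gflip p q x = ∑ k ∈ A, (p k * D k + q k * D (k-1)) := by
    rw [hGf2, hmap, hres1, hres2, ← Finset.sum_add_distrib]
  have hbij : ∑ k ∈ A, (p k * D k + q k * D (k-1))
      = ∑ j ∈ Finset.range n, (p (E j) * D (E j) + q (E j) * D (E j - 1)) := by
    symm
    apply Finset.sum_bij (fun j _ => E j)
    · intro j hj
      exact hEmem j (Finset.mem_range.mp hj)
    · intro j1 hj1 j2 hj2 heq
      by_contra hne2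
      rcases Nat.lt_or_ge j1 j2 with hh | hh
      · have := hEmono j1 j2 hh (Finset.mem_range.mp hj2); omega
      · have : j2 < j1 := by omega
        have := hEmono j2 j1 this (Finset.mem_range.mp hj1); omega
    · intro k hk
      obtain ⟨j, hj, hEj⟩ := hEsurj k hk
      exact ⟨j, Finset.mem_range.mpr hj, hEj⟩
    · intro j hj
      rfl
  -- step value at interfaces
  have hstepval : ∀ j, j < n → Sfun x (E j) = Sfun x (E j - 1) + (if Even j then 0 else 2) := by
    intro j hj
    have hss := sfun_step h (E j)
    rw [haltern j hj, haltern' j hj] at hss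
    by_cases hev : Even j
    · rw [if_pos hev, if_pos hev] at hss
      rw [if_pos hev]
      rw [if_neg h.ne, if_neg (fun hh => h.ne hh.symm)] at hss
      omega
    · rw [if_neg hev, if_neg hev] at hss
      rw [if_neg hev]
      rw [if_pos rfl, if_pos rfl] at hss
      omega
  set U : ℕ → ℤ := fun j => Sfun x (E j - 1) with hU
  have hterm : ∀ j, j < n → p (E j) * D (E j) + q (E j) * D (E j - 1)
      = (-1:ℝ)^j * (p (E j) - q (E j)) * (U j : ℝ) - (if Odd j then 2 * p (E j) else 0) := by
    intro j hj
    have hEj_Icc : E j ∈ Finset.Icc N M := by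
      have := hAIoc _ (hEmem j hj)
      simp only [Finset.mem_Icc]
      omega
    have hEj1_Icc : E j - 1 ∈ Finset.Icc N M := by
      have := hAIoc _ (hEmem j hj)
      simp only [Finset.mem_Icc]
      omega
    have hDk := flip_diff h (E j) hEj_Icc
    have hDk1 := flip_diff h (E j - 1) hEj1_Icc
    have hDkR : D (E j) = (((if x (E j) = b then (1:ℤ) else -1) * Sfun x (E j) : ℤ) : ℝ) := by
      rw [← hDk]
      simp only [hD]
      push_cast
      ring
    have hDk1R : D (E j - 1)
        = (((if x (E j - 1) = b then (1:ℤ) else -1) * Sfun x (E j - 1) : ℤ) : ℝ) := by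
      rw [← hDk1]
      simp only [hD]
      push_cast
      ring
    have hsv := hstepval j hj
    by_cases hev : Even j
    · have hx1 : x (E j) = b := by rw [haltern j hj, if_pos hev]
      have hx2 : x (E j - 1) = a := by rw [haltern' j hj, if_pos hev]
      have hx2' : x (E j - 1) ≠ b := by rw [hx2]; exact h.ne
      rw [if_pos hev] at hsv
      rw [hDkR, hDk1R, if_pos hx1, if_neg hx2', hsv]
      rw [Even.neg_one_pow hev, if_neg (by rw [Nat.odd_iff, Nat.even_iff] at *; omega)]
      push_cast
      ring
    · have hx1 : x (E j) ≠ b := by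
        rw [haltern j hj, if_neg hev]
        exact fun hh => h.ne hh
      have hx2 : x (E j - 1) = b := by rw [haltern' j hj, if_neg hev]
      rw [if_neg hev] at hsv
      rw [hDkR, hDk1R, if_neg hx1, if_pos hx2, hsv]
      rw [Odd.neg_one_pow (Nat.odd_iff.mpr (by rw [Nat.even_iff] at hev; omega)),
        if_pos (Nat.odd_iff.mpr (by rw [Nat.even_iff] at hev; omega))]
      push_cast
      ring
  -- diffU
  have hdiffU : ∀ j, j + 1 < n →
      U (j+1) - U j = (E (j+1) - E j - 1) + (if Even j then 0 else 2) := by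
    intro j hj
    have hEj1 : E j < E (j+1) := hEmono j (j+1) (by omega) hj
    simp only [hU]
    rw [sub_eq_iff_eq_add']
    have htel := sfun_tele h (E j - 1) (E (j+1) - 1) (by omega)
    rw [sub_eq_iff_eq_add'] at htel
    rw [htel]
    have hsplit2 : Finset.Ioc (E j - 1) (E (j+1) - 1)
        = insert (E j) (Finset.Ioc (E j) (E (j+1) - 1)) := by
      ext m
      simp only [Finset.mem_Ioc, Finset.mem_insert]
      omega
    rw [hsplit2, Finset.sum_insert (by simp)]
    have hrest : ∀ m ∈ Finset.Ioc (E j) (E (j+1) - 1),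
        ((if x (m-1) = b then (1:ℤ) else 0) + (if x m = a then (1:ℤ) else 0)) = 1 := by
      intro m hm
      simp only [Finset.mem_Ioc] at hm
      have hnoitf : x (m-1) = x m := hnoitf_between j m hj hm.1 (by omega)
      rcases hxab m with hh | hh
      · have hc1 : ¬ (x (m-1) = b) := by rw [hnoitf, hh]; exact h.ne
        rw [if_pos hh, if_neg hc1]
        norm_num
      · have hc1 : x (m-1) = b := by rw [hnoitf, hh]
        have hc2 : ¬ (x m = a) := by rw [hh]; exact fun h2 => h.ne h2.symm
        rw [if_neg hc2, if_pos hc1]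
        norm_num
    rw [Finset.sum_congr rfl hrest, Finset.sum_const, Int.card_Ioc, nsmul_eq_mul, mul_one]
    rw [Int.toNat_of_nonneg (by omega)]
    have hfirst : (if x (E j - 1) = b then (1:ℤ) else 0) + (if x (E j) = a then (1:ℤ) else 0)
        = (if Even j then 0 else 2) := by
      rw [haltern j (by omega), haltern' j (by omega)]
      by_cases hev : Even j
      · rw [if_pos hev, if_pos hev, if_pos hev, if_neg h.ne,
          if_neg (fun hh => h.ne hh.symm)]
        norm_num
      · rw [if_neg hev, if_neg hev, if_neg hev, if_pos rfl, if_pos rfl]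
        norm_num
    rw [hfirst]
    ring
  -- anchor
  set F : ℕ → ℤ := fun j => (cntb x b N (E j - 1) : ℤ) with hF
  have hFdiff : ∀ j, j + 1 < n →
      F (j+1) - F j = (if Even j then E (j+1) - E j - 1 else 1) := by
    intro j hj
    have hEj1 : E j < E (j+1) := hEmono j (j+1) (by omega) hj
    have htele := tele (fun m => (cntb x b N m : ℤ)) (E j - 1) (E (j+1) - 1) (by omega)
    simp only [hF]
    rw [← htele]
    have hcong : ∀ m ∈ Finset.Ioc (E j - 1) (E (j+1) - 1),
        ((cntb x b N m : ℤ) - (cntb x b N (m-1) : ℤ)) = (if x (m-1) = b then (1:ℤ) else 0) := by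
      intro m _
      rw [cntb_step h m]
      ring
    rw [Finset.sum_congr rfl hcong]
    have hsplit2 : Finset.Ioc (E j - 1) (E (j+1) - 1)
        = insert (E j) (Finset.Ioc (E j) (E (j+1) - 1)) := by
      ext m
      simp only [Finset.mem_Ioc, Finset.mem_insert]
      omega
    rw [hsplit2, Finset.sum_insert (by simp)]
    by_cases hev : Even j
    · have hx2 : x (E j - 1) ≠ b := by
        rw [haltern' j (by omega), if_pos hev]
        exact h.ne
      have hrest : ∀ m ∈ Finset.Ioc (E j) (E (j+1) - 1),
          (if x (m-1) = b then (1:ℤ) else 0) = 1 := by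
        intro m hm
        simp only [Finset.mem_Ioc] at hm
        have h1 : x (m-1) = x (E j) := by
          rcases eq_or_lt_of_le (by omega : E j ≤ m - 1) with heq | hlt
          · rw [← heq]
          · exact hblock j (m-1) hj (by omega) (by omega)
        have hc1 : x (m-1) = b := by rw [h1, haltern j (by omega), if_pos hev]
        rw [if_pos hc1]
      rw [Finset.sum_congr rfl hrest, Finset.sum_const, Int.card_Ioc, nsmul_eq_mul, mul_one]
      rw [Int.toNat_of_nonneg (by omega), if_neg hx2, if_pos hev]
      ring
    · have hx2 : x (E j - 1) = b := by rw [haltern' j (by omega), if_neg hev]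
      have hrest : ∀ m ∈ Finset.Ioc (E j) (E (j+1) - 1),
          (if x (m-1) = b then (1:ℤ) else 0) = 0 := by
        intro m hm
        simp only [Finset.mem_Ioc] at hm
        have h1 : x (m-1) = x (E j) := by
          rcases eq_or_lt_of_le (by omega : E j ≤ m - 1) with heq | hlt
          · rw [← heq]
          · exact hblock j (m-1) hj (by omega) (by omega)
        have hc1 : ¬ (x (m-1) = b) := by
          rw [h1, haltern j (by omega), if_neg hev]
          exact fun hh => h.ne hh
        rw [if_neg hc1]
      rw [Finset.sum_congr rfl hrest, Finset.sum_eq_zero (fun m hm => rfl)]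
      rw [if_pos hx2, if_neg hev]
      ring
  have hF0 : F 0 = 0 := by
    simp only [hF]
    have hemp : (Finset.Ioo N (E 0 - 1)).filter (fun l => x l = b) = ∅ := by
      rw [Finset.filter_eq_empty_iff]
      intro l hl
      simp only [Finset.mem_Ioo] at hl
      rw [hbelow l (by omega)]
      exact h.ne
    rw [cntb, hemp]
    simp
  have hUF : U (2*t) = F (2*t) := by
    have h2t : n - 1 = 2*t := by omega
    simp only [hU, hF]
    rw [sfun_eq h]
    have hc0 : cnta x a M (E (2*t) - 1) = 0 := by
      rw [cnta, Finset.card_eq_zero, Finset.filter_eq_empty_iff]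
      intro l hl
      simp only [Finset.mem_Ioo] at hl
      rw [habove l (by rw [h2t]; omega)]
      exact fun hh => h.ne hh.symm
    rw [hc0]
    ring
  have hanchor : U (2*t) = ∑ j ∈ (Finset.range (2*t)).filter (fun j => Even j),
      (U (j+1) - U j + 1) := by
    rw [hUF]
    have hFt : F (2*t) = ∑ j ∈ Finset.range (2*t), (F (j+1) - F j) := by
      rw [Finset.sum_range_sub F (2*t), hF0, sub_zero]
    rw [hFt, Finset.sum_filter]
    rw [← sub_eq_zero, ← Finset.sum_sub_distrib]
    have hterm2 : ∀ j ∈ Finset.range (2*t),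
        ((F (j+1) - F j) - (if Even j then U (j+1) - U j + 1 else 0))
        = (if Even j then (-1:ℤ) else 1) := by
      intro j hj
      simp only [Finset.mem_range] at hj
      rw [hFdiff j (by omega), hdiffU j (by omega)]
      split_ifs <;> ring
    rw [Finset.sum_congr rfl hterm2, parity_sum]
  -- apply core
  have hPQlow : ∀ j, j ≤ 2*t → sbar ≤ p (E j) + q (E j) :=
    fun j hj => hlow (E j) ((hmemA _).mp (hEmem j (by omega)))
  have hdstep : ∀ j, j + 1 < n → p (E (j+1)) - q (E (j+1)) ≤ p (E j) - q (E j) := by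
    intro j hj
    have h1 := hA4a (E j) (E (j+1)) (hEmono j (j+1) (by omega) hj)
      ((hmemA _).mp (hEmem j (by omega))) ((hmemA _).mp (hEmem _ hj))
      (fun m hm1 hm2 => hblock j m hj hm1 hm2)
    linarith
  have hdchain : ∀ j i, i ≤ j → j ≤ 2*t →
      p (E j) - q (E j) ≤ p (E i) - q (E i) := by
    intro j
    induction j with
    | zero =>
        intro i hij hj
        have : i = 0 := by omega
        subst this
        exact le_rfl
    | succ j ih =>
        intro i hij hj
        rcases eq_or_lt_of_le hij with rfl | hlt
        · exact le_rfl
        · exact le_trans (hdstep j (by omega)) (ih i (by omega) (by omega))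
  have hcore := core sbar hsbar t (fun j => p (E j)) (fun j => q (E j)) U
    (fun j k hjk hk => hdchain k j hjk hk)
    (fun j _ => hp (E j)) (fun j _ => hq (E j)) hPQlow
    (fun j hj hev => by
      have := hdiffU j (by omega)
      rw [if_pos hev] at this
      have := hEmono j (j+1) (by omega) (by omega)
      omega)
    (fun j hj hod => by
      have h1 := hdiffU j (by omega)
      rw [if_neg (by rw [Nat.odd_iff] at hod; rw [Nat.even_iff]; omega)] at h1
      have := hEmono j (j+1) (by omega) (by omega)
      omega)
    hanchor
  -- final computation
  have hGfinal : Gflip p q x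
      = ∑ j ∈ Finset.range n, (-1:ℝ)^j * (p (E j) - q (E j)) * (U j : ℝ)
        - 2 * ∑ j ∈ (Finset.range n).filter (fun j => Odd j), p (E j) := by
    rw [hGf3, hbij, Finset.sum_congr rfl (fun j hj => hterm j (Finset.mem_range.mp hj))]
    rw [Finset.sum_sub_distrib]
    congr 1
    rw [Finset.mul_sum, Finset.sum_filter]
  rw [hGfinal, hpnum, ht]
  have hgoal2 : sbar - sbar * (((2*t+1 : ℕ) : ℤ) : ℝ) / 2
      = sbar * (2 - (2*(t:ℝ)+1)) / 2 := by
    push_cast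
    ring
  rw [hgoal2]
  exact hcore
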